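/- Let G be a group with finite symmetric generating set S, and H a finite group. For a finite connected set A ⊆ G containing e with outer boundary dA in the Cayley graph X(G,S), let ν_{A,dA} = ν_A * ν̄_{dA} in the group algebra of H ≀ G. Then for distinct such sets A and B, ν_{A,dA} * ν_{B,dB} = 0. -/

import Mathlib

open Function MonoidAlgebra
open scoped Classical
set_option linter.unusedSectionVars false

noncomputable section

variable (G H : Type) [Group G] [Group H] [Fintype H]

/-- The automorphism `L_g` of the full group of configurations `G → H`,
`(L_g η)(x) = η (g⁻¹ x)`. -/
def lampAut (g : G) : (G → H) ≃* (G → H) where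
  toFun η := fun x => η (g⁻¹ * x)
  invFun η := fun x => η (g * x)
  left_inv η := by funext x; simp [← mul_assoc]
  right_inv η := by funext x; simp [← mul_assoc]
  map_mul' η η' := rfl

/-- The action homomorphism `G →* MulAut (G → H)`. -/
def lampHom : G →* MulAut (G → H) where
  toFun := lampAut G H
  map_one' := by ext η x; simp [lampAut]
  map_mul' g₁ g₂ := by ext η x; simp [lampAut, MulAut.mul_apply, mul_assoc]

/-- The unrestricted wreath product `(H^G) ⋊ G`. -/
abbrev WrFull := (G → H) ⋊[lampHom G H] G

/-- The (restricted) wreath product `H ≀ G = (⊕_G H) ⋊ G`, realized as the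
subgroup of the unrestricted wreath product consisting of the elements whose
configuration has finite support. -/
def Wreath : Subgroup (WrFull G H) where
  carrier := {w | (mulSupport w.left).Finite}
  one_mem' := by
    simp only [Set.mem_setOf_eq, SemidirectProduct.one_left]
    simp [mulSupport]
  mul_mem' := by
    intro a b ha hb
    simp only [Set.mem_setOf_eq, SemidirectProduct.mul_left] at *
    refine (ha.union ?_).subset (mulSupport_mul _ _)
    have : mulSupport (lampHom G H a.right b.left) =
        (fun x => (a.right)⁻¹ * x) ⁻¹' mulSupport b.left := by
      ext x
      simp [lampHom, lampAut, mulSupport]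
    rw [this]
    exact hb.preimage (by
      intro x _ y _ h
      simpa using mul_left_cancel h)
  inv_mem' := by
    intro a ha
    simp only [Set.mem_setOf_eq, SemidirectProduct.inv_left] at *
    have : mulSupport (lampHom G H (a.right)⁻¹ (a.left)⁻¹) =
        (fun x => a.right * x) ⁻¹' mulSupport a.left := by
      ext x
      simp [lampHom, lampAut, mulSupport]
    rw [this]
    exact ha.preimage (by
      intro x _ y _ h
      simpa using mul_left_cancel h)

/-- The configuration which has state `h` at the point `g` and is trivial
elsewhere. -/
def pointConf (g : G) (h : H) : G → H := fun x => if x = g then h else 1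

lemma pointConf_finite (g : G) (h : H) : (mulSupport (pointConf G H g h)).Finite := by
  apply (Set.finite_singleton g).subset
  intro x hx
  by_contra hxg
  simp only [Set.mem_singleton_iff] at hxg
  simp [mulSupport, pointConf, hxg] at hx

/-- A finitely supported configuration together with a position, as an
element of the wreath product. -/
def wr (η : G → H) (hη : (mulSupport η).Finite) (g : G) : Wreath G H :=
  ⟨⟨η, g⟩, hη⟩

/-- The embedding of the base group `G` in the wreath product, `g ↦ (1, g)`. -/
def embG (g : G) : Wreath G H :=
  wr G H 1 (by simp [mulSupport]) g

/-- The embedding of the lamp group `H` in the wreath product,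
`h ↦ (η_e^h, e)`. -/
def embH (h : H) : Wreath G H :=
  wr G H (pointConf G H 1 h) (pointConf_finite G H 1 h) 1

/-- The point mass `δ_g` at the embedded element `g ∈ G`, as an element of the
group algebra of the wreath product. -/
def deltaG (g : G) : MonoidAlgebra ℝ (Wreath G H) :=
  MonoidAlgebra.single (embG G H g) 1

/-- The uniform probability measure `ν` on the embedded copy of `H` inside the
wreath product. -/
def nu : MonoidAlgebra ℝ (Wreath G H) :=
  ∑ h : H, MonoidAlgebra.single (embH G H h) ((Fintype.card H : ℝ)⁻¹)

/-- The translated uniform measure `ν_g = δ_g * ν * δ_{g⁻¹}`. -/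
def nuAt (g : G) : MonoidAlgebra ℝ (Wreath G H) :=
  deltaG G H g * nu G H * deltaG G H g⁻¹

/-- The complementary projection `ν̄_g = δ_{(1,e)} - ν_g`. -/
def nuBarAt (g : G) : MonoidAlgebra ℝ (Wreath G H) :=
  1 - nuAt G H g

end

/-- The Cayley graph of `G` with respect to `S` (for symmetric `S` the second
condition in the adjacency is redundant). -/
def cayley (G : Type) [Group G] (S : Finset G) : SimpleGraph G where
  Adj x y := x ≠ y ∧ x⁻¹ * y ∈ S ∧ y⁻¹ * x ∈ S
  symm := by
    refine ⟨fun x y h => ?_⟩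
    exact ⟨h.1.symm, h.2.2, h.2.1⟩
  loopless := ⟨fun x h => h.1 rfl⟩

/-- The outer vertex boundary of the finite set `A` in the Cayley graph of `G`
with respect to the (symmetric) set `S`: all vertices outside `A` with a
neighbour in `A`. -/
noncomputable def cayleyBoundary (G : Type) [Group G] (S A : Finset G) : Finset G :=
  (A.biUnion fun x => S.image fun s => x * s).filter (· ∉ A)


section AuxLemmas
open Function MonoidAlgebra
open scoped Classical

variable (G H : Type) [Group G] [Group H] [Fintype H]

/-- The wreath-product element with lamp state `h` at site `x` and position `e`. -/
noncomputable def lampAt (x : G) (h : H) : Wreath G H :=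
  ⟨⟨pointConf G H x h, 1⟩, pointConf_finite G H x h⟩

lemma pointConf_mul_same (x : G) (h h' : H) :
    pointConf G H x h * pointConf G H x h' = pointConf G H x (h * h') := by
  funext z; by_cases hz : z = x <;> simp [pointConf, hz]

lemma pointConf_mul_comm {x y : G} (hxy : x ≠ y) (h h' : H) :
    pointConf G H x h * pointConf G H y h' = pointConf G H y h' * pointConf G H x h := by
  funext z
  by_cases hzx : z = x <;> by_cases hzy : z = y
  · exact absurd (hzx ▸ hzy) hxy
  all_goals simp [pointConf, hzx, hzy, hxy, hxy.symm]

lemma lampAt_mul_same (x : G) (h h' : H) :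
    lampAt G H x h * lampAt G H x h' = lampAt G H x (h * h') := by
  apply Subtype.ext
  apply SemidirectProduct.ext
  · show pointConf G H x h * lampHom G H 1 (pointConf G H x h')
        = pointConf G H x (h * h')
    simp only [map_one, MulAut.one_apply, pointConf_mul_same]
  · show (1 : G) * 1 = 1
    simp

lemma lampAt_commute {x y : G} (hxy : x ≠ y) (h h' : H) :
    lampAt G H x h * lampAt G H y h' = lampAt G H y h' * lampAt G H x h := by
  apply Subtype.ext
  apply SemidirectProduct.ext
  · show pointConf G H x h * lampHom G H 1 (pointConf G H y h')
        = pointConf G H y h' * lampHom G H 1 (pointConf G H x h)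
    simp [pointConf_mul_comm G H hxy]
  · rfl

lemma conj_embH (x : G) (h : H) :
    embG G H x * embH G H h * embG G H x⁻¹ = lampAt G H x h := by
  apply Subtype.ext
  apply SemidirectProduct.ext
  · show ((1 : G → H) * lampHom G H x (pointConf G H 1 h))
        * lampHom G H (x * 1) (1 : G → H) = pointConf G H x h
    simp only [map_mul, map_one, one_mul, mul_one]
    funext z
    show pointConf G H 1 h (x⁻¹ * z) = pointConf G H x h z
    by_cases hz : z = x
    · simp [pointConf, hz]
    · have hz' : x ≠ z := fun hc => hz hc.symm
      simp [pointConf, hz, hz', inv_mul_eq_one]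
  · show x * 1 * x⁻¹ = 1
    simp

lemma nuAt_eq_sum (x : G) :
    nuAt G H x = ∑ h : H, MonoidAlgebra.single (lampAt G H x h) ((Fintype.card H : ℝ)⁻¹) := by
  unfold nuAt nu deltaG
  rw [Finset.mul_sum, Finset.sum_mul]
  refine Finset.sum_congr rfl fun h _ => ?_
  rw [MonoidAlgebra.single_mul_single, MonoidAlgebra.single_mul_single,
    one_mul, mul_one, conj_embH]

lemma nuAt_commute (x y : G) : Commute (nuAt G H x) (nuAt G H y) := by
  rcases eq_or_ne x y with rfl | hxy
  · exact Commute.refl _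
  · rw [nuAt_eq_sum, nuAt_eq_sum]
    refine Commute.sum_left _ _ _ fun a _ => Commute.sum_right _ _ _ fun b _ => ?_
    unfold Commute SemiconjBy
    rw [MonoidAlgebra.single_mul_single, MonoidAlgebra.single_mul_single,
      lampAt_commute G H hxy]

lemma nuAt_idem (x : G) : nuAt G H x * nuAt G H x = nuAt G H x := by
  have hcard : (Fintype.card H : ℝ) ≠ 0 := Nat.cast_ne_zero.mpr Fintype.card_ne_zero
  rw [nuAt_eq_sum, Finset.mul_sum]
  calc (∑ h' : H, (∑ h : H, MonoidAlgebra.single (lampAt G H x h) ((Fintype.card H : ℝ)⁻¹)) *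
          MonoidAlgebra.single (lampAt G H x h') ((Fintype.card H : ℝ)⁻¹))
      = ∑ h' : H, ∑ h : H, MonoidAlgebra.single (lampAt G H x (h * h'))
          ((Fintype.card H : ℝ)⁻¹ * (Fintype.card H : ℝ)⁻¹) := by
        refine Finset.sum_congr rfl fun h' _ => ?_
        rw [Finset.sum_mul]
        refine Finset.sum_congr rfl fun h _ => ?_
        rw [MonoidAlgebra.single_mul_single, lampAt_mul_same]
    _ = ∑ h' : H, ∑ h : H, MonoidAlgebra.single (lampAt G H x h)
          ((Fintype.card H : ℝ)⁻¹ * (Fintype.card H : ℝ)⁻¹) := by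
        refine Finset.sum_congr rfl fun h' _ => ?_
        exact Fintype.sum_equiv (Equiv.mulRight h') _ _ fun h => rfl
    _ = (Fintype.card H : ℝ) •
          ∑ h : H, MonoidAlgebra.single (lampAt G H x h)
            ((Fintype.card H : ℝ)⁻¹ * (Fintype.card H : ℝ)⁻¹) := by
        rw [Finset.sum_const, Finset.card_univ, ← Nat.cast_smul_eq_nsmul ℝ]
    _ = ∑ h : H, MonoidAlgebra.single (lampAt G H x h) ((Fintype.card H : ℝ)⁻¹) := by
        rw [Finset.smul_sum]
        refine Finset.sum_congr rfl fun h _ => ?_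
        rw [MonoidAlgebra.smul_single']
        congr 1
        field_simp

lemma nuAt_mul_nuBarAt (y : G) : nuAt G H y * nuBarAt G H y = 0 := by
  rw [nuBarAt, mul_sub, mul_one, nuAt_idem, sub_self]

lemma nuBarAt_mul_nuAt (y : G) : nuBarAt G H y * nuAt G H y = 0 := by
  rw [nuBarAt, sub_mul, one_mul, nuAt_idem, sub_self]

lemma nuAt_commute_nuBarAt (x y : G) : Commute (nuAt G H x) (nuBarAt G H y) :=
  (Commute.one_right _).sub_right (nuAt_commute G H x y)

lemma cancel_mid {R : Type*} [Ring R] (p q r s nb n : R) (h1 : nb * n = 0) :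
    (p * (q * nb)) * ((n * r) * s) = 0 := by
  have e : (p * (q * nb)) * ((n * r) * s) = p * (q * ((nb * n) * (r * s))) := by
    simp only [mul_assoc]
  rw [e, h1, zero_mul, mul_zero, mul_zero]

lemma cancel_outer {R : Type*} [Ring R] (p q r s n nb : R) (h1 : n * nb = 0)
    (h2 : Commute n (q * r)) : ((p * n) * q) * (r * (nb * s)) = 0 := by
  have e1 : ((p * n) * q) * (r * (nb * s)) = p * ((n * (q * r)) * (nb * s)) := by
    simp only [mul_assoc]
  rw [e1, h2.eq]
  have e2 : p * ((q * r) * n * (nb * s)) = p * ((q * r) * ((n * nb) * s)) := by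
    simp only [mul_assoc]
  rw [e2, h1, zero_mul, mul_zero, mul_zero]

lemma walk_crosses (G : Type) [Group G] (S A B : Finset G) :
    ∀ (u v : (B : Set G)) (_ : ((cayley G S).induce (B : Set G)).Walk u v),
      (u : G) ∈ A → (v : G) ∉ A → ∃ y ∈ B, y ∈ cayleyBoundary G S A := by
  intro u v w
  induction w with
  | nil => exact fun h1 h2 => absurd h1 h2
  | @cons a b c hadj w ih =>
    intro ha hc
    by_cases hb : (b : G) ∈ A
    · exact ih hb hc
    · refine ⟨b, Finset.mem_coe.mp b.2, ?_⟩
      have hadj' : (a : G) ≠ b ∧ (a : G)⁻¹ * b ∈ S ∧ (b : G)⁻¹ * a ∈ S := hadj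
      rw [cayleyBoundary, Finset.mem_filter]
      refine ⟨Finset.mem_biUnion.mpr ⟨(a : G), ha, Finset.mem_image.mpr
        ⟨(a : G)⁻¹ * (b : G), hadj'.2.1, mul_inv_cancel_left _ _⟩⟩, by simpa using hb⟩

end AuxLemmas

/-- Let `A ≠ B` be finite connected subsets of the Cayley
graph `X(G,S)` containing the identity, with outer boundaries `dA`, `dB`.
Then in the group algebra of `H ≀ G` one has `ν_{A,dA} * ν_{B,dB} = 0`. -/
theorem nuBoundary_orthogonal (G H : Type) [Group G] [Group H] [Fintype H]
    (S : Finset G) (hS : ∀ s ∈ S, s⁻¹ ∈ S) (A B : Finset G)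
    (h1A : (1 : G) ∈ A) (h1B : (1 : G) ∈ B)
    (hAconn : ((cayley G S).induce (A : Set G)).Connected)
    (hBconn : ((cayley G S).induce (B : Set G)).Connected)
    (hAB : A ≠ B)
    (hcA : (A : Set G).Pairwise fun a b => Commute (nuAt G H a) (nuAt G H b))
    (hcdA : ((cayleyBoundary G S A : Finset G) : Set G).Pairwise
      fun a b => Commute (nuBarAt G H a) (nuBarAt G H b))
    (hcB : (B : Set G).Pairwise fun a b => Commute (nuAt G H a) (nuAt G H b))
    (hcdB : ((cayleyBoundary G S B : Finset G) : Set G).Pairwise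
      fun a b => Commute (nuBarAt G H a) (nuBarAt G H b)) :
    (A.noncommProd (nuAt G H) hcA *
        (cayleyBoundary G S A).noncommProd (nuBarAt G H) hcdA) *
      (B.noncommProd (nuAt G H) hcB *
        (cayleyBoundary G S B).noncommProd (nuBarAt G H) hcdB) = 0 := by
  by_cases hsub : ∀ b ∈ B, b ∈ A
  · have hex : ∃ a ∈ A, a ∉ B := by
      by_contra hc
      push_neg at hc
      exact hAB (Finset.Subset.antisymm hc hsub)
    obtain ⟨a, haA, haB⟩ := hex
    obtain ⟨y, hyA, hydB⟩ := walk_crosses G S B A ⟨1, h1A⟩ ⟨a, haA⟩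
      ((hAconn.preconnected ⟨1, h1A⟩ ⟨a, haA⟩).some) h1B haB
    rw [← Finset.noncommProd_erase_mul _ hyA _ hcA,
        ← Finset.mul_noncommProd_erase _ hydB _ hcdB]
    refine cancel_outer _ _ _ _ _ _ (nuAt_mul_nuBarAt G H y) ?_
    exact (Finset.noncommProd_commute _ _ _ _
        fun z _ => nuAt_commute_nuBarAt G H y z).mul_right
      (Finset.noncommProd_commute _ _ _ _ fun z _ => nuAt_commute G H y z)
  · push_neg at hsub
    obtain ⟨b, hbB, hbA⟩ := hsub
    obtain ⟨y, hyB, hydA⟩ := walk_crosses G S A B ⟨1, h1B⟩ ⟨b, hbB⟩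
      ((hBconn.preconnected ⟨1, h1B⟩ ⟨b, hbB⟩).some) h1A hbA
    rw [← Finset.noncommProd_erase_mul _ hydA _ hcdA,
        ← Finset.mul_noncommProd_erase _ hyB _ hcB]
    exact cancel_mid _ _ _ _ _ _ (nuBarAt_mul_nuAt G H y)
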